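/- Let ψ : ℝ → ℝ be twice continuously differentiable with ψ''(s) + ψ'(s) = sinh(2ψ(s)) for all s ∈ ℝ, and suppose ψ(s) → 0 and ψ'(s) → 0 as s → +∞. Then for every s ∈ ℝ the function ρ ↦ ψ'(ρ)² is integrable on [s,∞) and ∫_{s}^{∞} ψ'(ρ)² dρ = (1/2)·ψ'(s)² − sinh²(ψ(s)). -/

import Mathlib

open Set MeasureTheory Filter

/-- Energy identity for the equation ψ'' + ψ' = sinh(2ψ). -/
theorem sinh_energy_identity (ψ : ℝ → ℝ) (hψ : ContDiff ℝ 2 ψ)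
    (heq : ∀ s : ℝ, deriv (deriv ψ) s + deriv ψ s = Real.sinh (2 * ψ s))
    (hlim : Tendsto ψ atTop (nhds 0))
    (hlim' : Tendsto (deriv ψ) atTop (nhds 0)) :
    ∀ s : ℝ,
      IntegrableOn (fun ρ => (deriv ψ ρ) ^ 2) (Ici s) ∧
      ∫ ρ in Ici s, (deriv ψ ρ) ^ 2 =
        (1 / 2) * (deriv ψ s) ^ 2 - (Real.sinh (ψ s)) ^ 2 := by
  intro s
  set f : ℝ → ℝ := fun x => (1/2) * Real.cosh (2 * ψ x) - (1/2) * (deriv ψ x)^2 with hf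
  have hdψ : Differentiable ℝ ψ := hψ.differentiable (by norm_num)
  have hdψ' : Differentiable ℝ (deriv ψ) := by
    have := (contDiff_succ_iff_deriv (n := 1)).1 hψ
    exact this.2.2.differentiable (by norm_num)
  have hcψ' : Continuous (deriv ψ) := hdψ'.continuous
  have hderiv : ∀ x : ℝ, HasDerivAt f ((deriv ψ x)^2) x := by
    intro x
    have h1 : HasDerivAt (fun y => (1/2) * Real.cosh (2 * ψ y))
        ((1/2) * (Real.sinh (2 * ψ x) * (2 * deriv ψ x))) x := by
      have := ((Real.hasDerivAt_cosh (2 * ψ x)).comp x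
        (((hdψ x).hasDerivAt).const_mul 2))
      exact this.const_mul (1/2)
    have h2 : HasDerivAt (fun y => (1/2) * (deriv ψ y)^2)
        ((1/2) * (2 * deriv ψ x ^ 1 * deriv (deriv ψ) x)) x := by
      exact (((hdψ' x).hasDerivAt).pow 2).const_mul (1/2)
    have h : HasDerivAt f _ x := h1.sub h2
    convert h using 1
    have := heq x
    have h3 : deriv (deriv ψ) x = Real.sinh (2 * ψ x) - deriv ψ x := by linarith
    rw [h3]; ring
  have hcont : Continuous f := by
    fun_prop
  have hlimf : Tendsto f atTop (nhds (1/2)) := by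
    have h1 : Tendsto (fun x => (1/2) * Real.cosh (2 * ψ x)) atTop (nhds ((1/2) * Real.cosh (2 * 0))) := by
      exact (Real.continuous_cosh.tendsto _).comp (hlim.const_mul 2) |>.const_mul (1/2)
    have h2 : Tendsto (fun x => (1/2) * (deriv ψ x)^2) atTop (nhds ((1/2) * 0^2)) := by
      exact ((hlim'.pow 2)).const_mul (1/2)
    have := h1.sub h2
    simp only [hf]
    simpa using this
  have key := MeasureTheory.integral_Ioi_of_hasDerivAt_of_nonneg'
    (g := f) (g' := fun x => (deriv ψ x)^2) (a := s)
    (fun x _ => hderiv x) (fun x _ => sq_nonneg _) hlimf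
  have hint : IntegrableOn (fun ρ => (deriv ψ ρ) ^ 2) (Ici s) := by
    rw [integrableOn_Ici_iff_integrableOn_Ioi]
    exact MeasureTheory.integrableOn_Ioi_deriv_of_nonneg' (fun x _ => hderiv x)
      (fun x _ => sq_nonneg _) hlimf
  refine ⟨hint, ?_⟩
  rw [MeasureTheory.integral_Ici_eq_integral_Ioi, key, hf]
  have hc : Real.cosh (2 * ψ s) = Real.cosh (ψ s)^2 + Real.sinh (ψ s)^2 := Real.cosh_two_mul _
  have hs : Real.cosh (ψ s)^2 = 1 + Real.sinh (ψ s)^2 := Real.cosh_sq' _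
  simp only [hc]
  linarith [hs]
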